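/- Let σ = exp(ad(t^{n-1})) with n ≥ 2. Then σ(D(R, k[Xₙ])) = D(R, Uₙ), where k[Xₙ] = k + tⁿk[t] and Uₙ = k(1 - t^{n-1}) + tⁿk[t]. -/

import Mathlib

open Polynomial

/-- Multiplication by `t` as a `k`-linear endomorphism of `k[t]`. -/
noncomputable def Tmul (k : Type) [Field k] : Module.End k (Polynomial k) :=
  Algebra.lmul k (Polynomial k) X

/-- The derivative `∂ = d/dt` as a `k`-linear endomorphism of `k[t]`. -/
noncomputable def Dop (k : Type) [Field k] : Module.End k (Polynomial k) :=
  Polynomial.derivative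

/-- The first Weyl algebra `A₁ = k⟨t,∂⟩`, realized as the subalgebra of
`End_k(k[t])` generated by multiplication by `t` and the derivative. -/
noncomputable def WeylA (k : Type) [Field k] : Subalgebra k (Module.End k (Polynomial k)) :=
  Algebra.adjoin k {Tmul k, Dop k}

/-- `ad(p) : d ↦ [d,p] = dp - pd`, as a `k`-linear endomorphism of `End_k(k[t])`. -/
noncomputable def adOp {k : Type} [Field k] (p : Module.End k (Polynomial k)) :
    Module.End k (Module.End k (Polynomial k)) :=
  LinearMap.mulRight k p - LinearMap.mulLeft k p

section Aux

open Finset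

set_option linter.unusedSectionVars false

variable {k : Type} [Field k] [CharZero k]

lemma adOp_apply (p d : Module.End k (Polynomial k)) : adOp p d = d * p - p * d := by
  simp [adOp, LinearMap.sub_apply, LinearMap.mulRight_apply, LinearMap.mulLeft_apply]

lemma adOp_mul (p x y : Module.End k (Polynomial k)) :
    adOp p (x * y) = x * adOp p y + adOp p x * y := by
  rw [adOp_apply, adOp_apply, adOp_apply, mul_sub, sub_mul]
  simp only [← mul_assoc]; abel

lemma adOp_pow_mono {p x : Module.End k (Polynomial k)} {a b : ℕ} (hab : a ≤ b)
    (h : (adOp p ^ a) x = 0) : (adOp p ^ b) x = 0 := by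
  have : b = (b - a) + a := by omega
  rw [this, pow_add, Module.End.mul_apply, h, map_zero]

lemma adOp_pow_mul (p : Module.End k (Polynomial k)) :
    ∀ (m a b : ℕ) (x y : Module.End k (Polynomial k)), a + b = m →
      (adOp p ^ a) x = 0 → (adOp p ^ b) y = 0 → (adOp p ^ m) (x * y) = 0 := by
  intro m
  induction m with
  | zero =>
    intro a b x y hab hx hy
    have ha : a = 0 := by omega
    subst ha
    simp only [pow_zero, Module.End.one_apply] at hx ⊢
    rw [hx, zero_mul]
  | succ s IH =>
    intro a b x y hab hx hy
    rcases Nat.eq_zero_or_pos a with ha | ha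
    · subst ha
      simp only [pow_zero, Module.End.one_apply] at hx
      rw [hx, zero_mul, map_zero]
    rcases Nat.eq_zero_or_pos b with hb | hb
    · subst hb
      simp only [pow_zero, Module.End.one_apply] at hy
      rw [hy, mul_zero, map_zero]
    obtain ⟨a', rfl⟩ : ∃ a', a = a' + 1 := ⟨a - 1, by omega⟩
    obtain ⟨b', rfl⟩ : ∃ b', b = b' + 1 := ⟨b - 1, by omega⟩
    have hstep : (adOp p ^ (s + 1)) (x * y) = (adOp p ^ s) (adOp p (x * y)) := by
      rw [pow_succ, Module.End.mul_apply]
    rw [hstep, adOp_mul, map_add]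
    have h1 : (adOp p ^ s) (x * adOp p y) = 0 := by
      refine IH (a' + 1) b' x (adOp p y) (by omega) hx ?_
      have : (adOp p ^ b') (adOp p y) = (adOp p ^ (b' + 1)) y := by
        rw [pow_succ, Module.End.mul_apply]
      rw [this, hy]
    have h2 : (adOp p ^ s) (adOp p x * y) = 0 := by
      refine IH a' (b' + 1) (adOp p x) y (by omega) ?_ hy
      have : (adOp p ^ a') (adOp p x) = (adOp p ^ (a' + 1)) x := by
        rw [pow_succ, Module.End.mul_apply]
      rw [this, hx]
    rw [h1, h2, add_zero]

lemma Tmul_pow (m : ℕ) : Tmul k ^ m = Algebra.lmul k (Polynomial k) (X ^ m) := by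
  rw [Tmul, ← map_pow]

lemma lmul_app (a h : Polynomial k) : Algebra.lmul k (Polynomial k) a h = a * h := rfl

lemma adOp_lmul_lmul (a b : Polynomial k) :
    adOp (Algebra.lmul k (Polynomial k) a) (Algebra.lmul k (Polynomial k) b) = 0 := by
  rw [adOp_apply, ← map_mul, ← map_mul, mul_comm, sub_self]

lemma adOp_Dop (m : ℕ) :
    adOp (Tmul k ^ m) (Dop k)
      = Algebra.lmul k (Polynomial k) (derivative (X ^ m : Polynomial k)) := by
  rw [Tmul_pow, adOp_apply]
  refine LinearMap.ext fun h => ?_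
  simp only [LinearMap.sub_apply, Module.End.mul_apply, lmul_app, Dop, derivative_mul]
  ring

lemma locNilp (n : ℕ) (d : WeylA k) :
    ∃ N, (adOp (Tmul k ^ (n - 1)) ^ N) (d : Module.End k (Polynomial k)) = 0 := by
  obtain ⟨x, hx⟩ := d
  have hd : x ∈ Algebra.adjoin k {Tmul k, Dop k} := hx
  show ∃ N, (adOp (Tmul k ^ (n - 1)) ^ N) x = 0
  clear hx
  induction hd using Algebra.adjoin_induction with
  | mem x hx =>
    rcases hx with hx | hx
    · refine ⟨1, ?_⟩
      rw [pow_one, hx, Tmul_pow, Tmul, adOp_lmul_lmul]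
    · rw [Set.mem_singleton_iff] at hx
      refine ⟨2, ?_⟩
      rw [pow_two, Module.End.mul_apply, hx, adOp_Dop, Tmul_pow, adOp_lmul_lmul]
  | algebraMap r =>
    refine ⟨1, ?_⟩
    rw [pow_one, adOp_apply, Algebra.commutes, sub_self]
  | add x y hx hy ihx ihy =>
    obtain ⟨Nx, hNx⟩ := ihx
    obtain ⟨Ny, hNy⟩ := ihy
    refine ⟨Nx + Ny, ?_⟩
    rw [map_add, adOp_pow_mono (Nat.le_add_right _ _) hNx,
      adOp_pow_mono (Nat.le_add_left _ _) hNy, add_zero]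
  | mul x y hx hy ihx ihy =>
    obtain ⟨Nx, hNx⟩ := ihx
    obtain ⟨Ny, hNy⟩ := ihy
    exact ⟨Nx + Ny, adOp_pow_mul _ _ Nx Ny x y rfl hNx hNy⟩

lemma fact_choose_inv (s m : ℕ) (hm : m ≤ s) :
    (m.factorial : k)⁻¹ * ((s - m).factorial : k)⁻¹
      = (s.choose m : k) * (s.factorial : k)⁻¹ := by
  have h := Nat.choose_mul_factorial_mul_factorial hm
  have h1 : (m.factorial : k) ≠ 0 := Nat.cast_ne_zero.2 (Nat.factorial_ne_zero m)
  have h2 : ((s - m).factorial : k) ≠ 0 := Nat.cast_ne_zero.2 (Nat.factorial_ne_zero _)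
  have h3 : (s.factorial : k) ≠ 0 := Nat.cast_ne_zero.2 (Nat.factorial_ne_zero s)
  have h4 : (s.choose m : k) * (m.factorial : k) * ((s - m).factorial : k)
      = (s.factorial : k) := by exact_mod_cast congrArg (Nat.cast : ℕ → k) h
  field_simp
  linear_combination -h4

lemma alt_sum_choose (s : ℕ) :
    (∑ m ∈ range (s + 1), (-1 : k) ^ m * (s.choose m : k)) = if s = 0 then 1 else 0 := by
  have h := Int.alternating_sum_range_choose (n := s)
  have := congrArg (Int.cast : ℤ → k) h
  push_cast at this
  rw [this]

lemma exp_inv {V : Type} [AddCommGroup V] [Module k V]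
    (δ δ' : Module.End k V) (hδ' : ∀ v, δ' v = -(δ v)) (N : ℕ) (x : V)
    (hx : (δ ^ N) x = 0) :
    ∑ m ∈ range N, (m.factorial : k)⁻¹ •
      (δ' ^ m) (∑ j ∈ range N, (j.factorial : k)⁻¹ • (δ ^ j) x) = x := by
  have hδeq : δ' = -δ := LinearMap.ext fun v => by rw [hδ', LinearMap.neg_apply]
  subst hδeq
  rcases Nat.eq_zero_or_pos N with hN | hN
  · subst hN
    simp only [range_zero, sum_empty]
    simpa using hx.symm
  have key : ∀ m j : ℕ, ((-δ) ^ m) ((j.factorial : k)⁻¹ • (δ ^ j) x)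
      = ((-1 : k) ^ m * (j.factorial : k)⁻¹) • (δ ^ (m + j)) x := by
    intro m j
    have h1 : (-δ) ^ m = ((-1 : k) ^ m) • (δ ^ m) := by
      rw [← neg_one_smul k δ, _root_.smul_pow]
    rw [h1, LinearMap.smul_apply, map_smul, pow_add, Module.End.mul_apply, smul_smul]
  calc
    ∑ m ∈ range N, (m.factorial : k)⁻¹ •
        ((-δ) ^ m) (∑ j ∈ range N, (j.factorial : k)⁻¹ • (δ ^ j) x)
      = ∑ m ∈ range N, ∑ j ∈ range N,
          ((-1 : k) ^ m * ((m.factorial : k)⁻¹ * (j.factorial : k)⁻¹)) • (δ ^ (m + j)) x := by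
        refine sum_congr rfl fun m _ => ?_
        rw [map_sum, Finset.smul_sum]
        refine sum_congr rfl fun j _ => ?_
        rw [key, smul_smul]
        ring_nf
    _ = ∑ m ∈ range N, ∑ j ∈ range (N - m),
          ((-1 : k) ^ m * ((m.factorial : k)⁻¹ * (j.factorial : k)⁻¹)) • (δ ^ (m + j)) x := by
        refine sum_congr rfl fun m hm => ?_
        rw [mem_range] at hm
        refine (sum_subset (range_subset_range.2 (by omega)) ?_).symm
        intro j hj hj2
        rw [mem_range] at hj hj2
        have hz : (δ ^ (m + j)) x = 0 := by
          have he : m + j = (m + j - N) + N := by omega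
          rw [he, pow_add, Module.End.mul_apply, hx, map_zero]
        rw [hz, smul_zero]
    _ = ∑ s ∈ range N, ∑ m ∈ range (s + 1),
          ((-1 : k) ^ m * ((m.factorial : k)⁻¹ * (((s - m).factorial : k))⁻¹)) • (δ ^ s) x := by
        rw [sum_sigma', sum_sigma']
        refine Finset.sum_nbij' (fun a => ⟨a.1 + a.2, a.1⟩) (fun a => ⟨a.2, a.1 - a.2⟩)
          ?_ ?_ ?_ ?_ ?_
        · rintro ⟨m, j⟩ ha
          simp only [mem_sigma, mem_range] at ha ⊢
          omega
        · rintro ⟨s, m⟩ ha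
          simp only [mem_sigma, mem_range] at ha ⊢
          omega
        · rintro ⟨m, j⟩ ha
          simp only [mem_sigma, mem_range] at ha
          have he : m + j - m = j := by omega
          simp only [he]
        · rintro ⟨s, m⟩ ha
          simp only [mem_sigma, mem_range] at ha
          have he : m + (s - m) = s := by omega
          simp only [he]
        · rintro ⟨m, j⟩ ha
          simp only [mem_sigma, mem_range] at ha
          have h1 : m + j - m = j := by omega
          simp only [h1]
    _ = ∑ s ∈ range N, ((s.factorial : k)⁻¹ *
          ∑ m ∈ range (s + 1), (-1 : k) ^ m * (s.choose m : k)) • (δ ^ s) x := by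
        refine sum_congr rfl fun s _ => ?_
        rw [← Finset.sum_smul]
        congr 1
        rw [Finset.mul_sum]
        refine sum_congr rfl fun m hm => ?_
        rw [mem_range] at hm
        rw [fact_choose_inv s m (by omega)]
        ring
    _ = x := by
        rw [Finset.sum_eq_single_of_mem 0 (mem_range.2 hN)]
        · simp [alt_sum_choose]
        · intro s _ hs
          rw [alt_sum_choose, if_neg hs]
          simp

noncomputable def piQ (k : Type) [Field k] (n : ℕ) :
    Polynomial k →ₐ[k] (Polynomial k ⧸ Ideal.span {(X : Polynomial k) ^ n}) :=
  Ideal.Quotient.mkₐ k _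

lemma piQ_zero_of_dvd {n : ℕ} {a : Polynomial k} (h : (X : Polynomial k) ^ n ∣ a) :
    piQ k n a = 0 := by
  rw [piQ, Ideal.Quotient.mkₐ_eq_mk, Ideal.Quotient.eq_zero_iff_mem, Ideal.mem_span_singleton]
  exact h

lemma piQ_eq_iff {n : ℕ} {a b : Polynomial k} :
    piQ k n a = piQ k n b ↔ (X : Polynomial k) ^ n ∣ a - b := by
  rw [piQ, Ideal.Quotient.mkₐ_eq_mk, Ideal.Quotient.eq, Ideal.mem_span_singleton]

lemma adOp_lmul_app (w : Polynomial k) (d : Module.End k (Polynomial k)) (g : Polynomial k) :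
    adOp (Algebra.lmul k (Polynomial k) w) d g = d (w * g) - w * d g := by
  rw [adOp_apply]
  simp only [LinearMap.sub_apply, Module.End.mul_apply, lmul_app]

lemma engine_term (n : ℕ) (w : Polynomial k) (hw : piQ k n w * piQ k n w = 0) :
    ∀ (m : ℕ) (d : Module.End k (Polynomial k)) (h : Polynomial k),
      piQ k n ((adOp (Algebra.lmul k (Polynomial k) w) ^ m) d h)
        = piQ k n (d (w ^ m * h))
          - (m : k) • (piQ k n w * piQ k n (d (w ^ (m - 1) * h))) := by
  intro m
  induction m with
  | zero =>
    intro d h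
    simp only [pow_zero, Module.End.one_apply, one_mul, Nat.cast_zero, zero_smul, sub_zero]
  | succ s IH =>
    intro d h
    have hstep : (adOp (Algebra.lmul k (Polynomial k) w) ^ (s + 1)) d
        = (adOp (Algebra.lmul k (Polynomial k) w) ^ s)
            (adOp (Algebra.lmul k (Polynomial k) w) d) := by
      rw [pow_succ, Module.End.mul_apply]
    rw [hstep, IH]
    rcases s with _ | s'
    · rw [adOp_lmul_app, map_sub, map_mul (piQ k n) w (d (w ^ 0 * h))]
      simp only [zero_add, pow_one, pow_zero, one_mul, Nat.cast_one, one_smul,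
        Nat.cast_zero, zero_smul, sub_zero, Nat.sub_self]
    · rw [adOp_lmul_app, adOp_lmul_app]
      have h1 : w * (w ^ (s' + 1) * h) = w ^ (s' + 1 + 1) * h := by ring
      have h2 : w * (w ^ (s' + 1 - 1) * h) = w ^ (s' + 1) * h := by
        simp only [Nat.add_sub_cancel]; ring
      have h3 : (s' + 1 + 1 : ℕ) - 1 = s' + 1 := rfl
      rw [h1, h2, h3]
      simp only [map_sub]
      rw [map_mul (piQ k n) w (d (w ^ (s' + 1) * h)),
        map_mul (piQ k n) w (d (w ^ (s' + 1 - 1) * h))]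
      set A := piQ k n (d (w ^ (s' + 1) * h))
      set B := piQ k n (d (w ^ (s' + 1 + 1) * h))
      set C := piQ k n (d (w ^ (s' + 1 - 1) * h))
      set W := piQ k n w
      have hWWC : W * (W * C) = 0 := by rw [← mul_assoc, hw, zero_mul]
      rw [mul_sub W A (W * C), smul_sub, hWWC, smul_zero, sub_zero]
      push_cast
      module

lemma inv_fact_succ (i : ℕ) :
    (((i + 1).factorial : k))⁻¹ * (((i : k) + 1)) = ((i.factorial : k))⁻¹ := by
  have h1 : ((i : k) + 1) ≠ 0 := by
    have : ((i + 1 : ℕ) : k) ≠ 0 := Nat.cast_ne_zero.2 (Nat.succ_ne_zero i)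
    push_cast at this; exact this
  have h2 : ((i.factorial : k)) ≠ 0 := Nat.cast_ne_zero.2 (Nat.factorial_ne_zero i)
  rw [Nat.factorial_succ]
  push_cast
  field_simp

lemma engine (n : ℕ) (w : Polynomial k) (hw : piQ k n w * piQ k n w = 0)
    (d : Module.End k (Polynomial k)) (M : ℕ) (h : Polynomial k) :
    piQ k n ((∑ m ∈ range M,
        (m.factorial : k)⁻¹ • (adOp (Algebra.lmul k (Polynomial k) w) ^ m) d) h)
      = (∑ j ∈ range M, (j.factorial : k)⁻¹ • piQ k n (d (w ^ j * h)))
        - piQ k n w * ∑ j ∈ range (M - 1), (j.factorial : k)⁻¹ • piQ k n (d (w ^ j * h)) := by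
  have step1 : piQ k n ((∑ m ∈ range M,
      (m.factorial : k)⁻¹ • (adOp (Algebra.lmul k (Polynomial k) w) ^ m) d) h)
      = ∑ m ∈ range M, (m.factorial : k)⁻¹ •
          piQ k n (((adOp (Algebra.lmul k (Polynomial k) w) ^ m) d) h) := by
    rw [LinearMap.sum_apply, map_sum]
    refine sum_congr rfl fun m _ => ?_
    rw [LinearMap.smul_apply, map_smul]
  rw [step1]
  have step2 : ∀ m ∈ range M, (m.factorial : k)⁻¹ •
      piQ k n (((adOp (Algebra.lmul k (Polynomial k) w) ^ m) d) h)
      = (m.factorial : k)⁻¹ • piQ k n (d (w ^ m * h))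
        - ((m.factorial : k)⁻¹ * (m : k)) • (piQ k n w * piQ k n (d (w ^ (m - 1) * h))) := by
    intro m _
    rw [engine_term n w hw m d h, smul_sub, smul_smul]
  rw [sum_congr rfl step2, Finset.sum_sub_distrib]
  congr 1
  rcases M with _ | M'
  · simp
  rw [Finset.sum_range_succ']
  simp only [Nat.cast_zero, mul_zero, zero_smul, add_zero, Nat.add_sub_cancel]
  rw [Finset.mul_sum]
  refine sum_congr rfl fun i _ => ?_
  have hc : ((i + 1 : ℕ) : k) = (i : k) + 1 := by push_cast; ring
  rw [hc, inv_fact_succ, mul_smul_comm]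

lemma extract (n : ℕ) (hn : 2 ≤ n) {a b a' b' : k}
    (hd : (X : Polynomial k) ^ n ∣ C (a - a') + C (b - b') * X ^ (n - 1)) :
    a = a' ∧ b = b' := by
  obtain ⟨q, hq⟩ := hd
  rw [mul_comm ((X : Polynomial k) ^ n) q] at hq
  have h0 := congrArg (fun r => Polynomial.coeff r 0) hq
  have h1 := congrArg (fun r => Polynomial.coeff r (n - 1)) hq
  simp only [coeff_add, coeff_C, coeff_C_mul, coeff_X_pow, coeff_mul_X_pow'] at h0 h1
  have e2 : ¬ (n ≤ 0) := by omega
  have e3 : ¬ (n ≤ n - 1) := by omega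
  have e4 : ¬ (n - 1 = 0) := by omega
  rw [if_pos trivial, if_neg (show ¬(n - 1 ≤ 0) by omega), add_zero, if_neg e2] at h0
  rw [if_neg e4, if_pos (le_refl (n - 1)), if_pos (show n - 1 - (n - 1) = 0 by omega),
    zero_add, if_neg e3] at h1
  exact ⟨sub_eq_zero.mp h0, sub_eq_zero.mp h1⟩

end Aux

/-- For `n ≥ 2` and `σ = exp(ad(t^{n-1}))`, one has
`σ(D(R, k[Xₙ])) = D(R, Uₙ)`, where `k[Xₙ] = k + tⁿk[t]` and
`Uₙ = k(1 - t^{n-1}) + tⁿk[t]`. -/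
theorem stmt16 {k : Type} [Field k] [CharZero k] (n : ℕ) (hn : 2 ≤ n)
    (p : Module.End k (Polynomial k)) (hp : p = Tmul k ^ (n - 1))
    (σ : WeylA k ≃ₐ[k] WeylA k)
    (hσ : ∀ (d : WeylA k) (N : ℕ),
        (adOp p ^ N) (d : Module.End k (Polynomial k)) = 0 →
        (σ d : Module.End k (Polynomial k)) =
          ∑ m ∈ Finset.range N,
            ((m.factorial : k)⁻¹ • (adOp p ^ m) (d : Module.End k (Polynomial k)))) :
    σ '' {d : WeylA k | ∀ h : Polynomial k, (d : Module.End k (Polynomial k)) h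
            ∈ {a : Polynomial k | ∃ c : k, ∃ q : Polynomial k, a = C c + X ^ n * q}}
      = {d : WeylA k | ∀ h : Polynomial k, (d : Module.End k (Polynomial k)) h
            ∈ {a : Polynomial k | ∃ c : k, ∃ q : Polynomial k,
                a = C c * (1 - X ^ (n - 1)) + X ^ n * q}} := by
  subst hp
  have hpw : Tmul k ^ (n - 1) = Algebra.lmul k (Polynomial k) (X ^ (n - 1)) := Tmul_pow _
  have hww : piQ k n (X ^ (n - 1) : Polynomial k) * piQ k n (X ^ (n - 1) : Polynomial k) = 0 := by
    rw [← map_mul, ← pow_add]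
    exact piQ_zero_of_dvd (pow_dvd_pow X (by omega))
  have hXn : ∀ q : Polynomial k, piQ k n ((X : Polynomial k) ^ n * q) = 0 :=
    fun q => piQ_zero_of_dvd (dvd_mul_right _ _)
  ext e
  simp only [Set.mem_image, Set.mem_setOf_eq]
  constructor
  · rintro ⟨d, hd, rfl⟩
    intro h
    obtain ⟨N, hN⟩ := locNilp n d
    have hd2 : ∀ g : Polynomial k, ∃ c : k, ∃ q : Polynomial k,
        (d : Module.End k (Polynomial k)) g = C c + X ^ n * q := hd
    choose c q hcq using hd2
    set S : ℕ → k := fun M => ∑ j ∈ Finset.range M,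
      (j.factorial : k)⁻¹ * c (((X : Polynomial k) ^ (n - 1)) ^ j * h) with hSdef
    have hG : ∀ M : ℕ, (∑ j ∈ Finset.range M, (j.factorial : k)⁻¹ •
        piQ k n ((d : Module.End k (Polynomial k)) (((X : Polynomial k) ^ (n - 1)) ^ j * h)))
        = piQ k n (C (S M)) := by
      intro M
      have hCS : C (S M) = ∑ j ∈ Finset.range M,
          C ((j.factorial : k)⁻¹ * c (((X : Polynomial k) ^ (n - 1)) ^ j * h)) :=
        map_sum C _ _
      rw [hCS, map_sum]
      refine Finset.sum_congr rfl fun j _ => ?_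
      rw [hcq (((X : Polynomial k) ^ (n - 1)) ^ j * h), map_add, hXn, add_zero, ← map_smul]
      congr 1
      rw [Polynomial.smul_C, smul_eq_mul]
    have hkey : ∀ M : ℕ, N ≤ M →
        piQ k n (((σ d : WeylA k) : Module.End k (Polynomial k)) h)
          = piQ k n (C (S M) - C (S (M - 1)) * X ^ (n - 1)) := by
      intro M hM
      have hσM := hσ d M (adOp_pow_mono hM hN)
      rw [hpw] at hσM
      rw [hσM, engine n ((X : Polynomial k) ^ (n - 1)) hww _ M h, hG, hG, map_sub, map_mul]
      ring
    have e1 := hkey (N + 1) (by omega)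
    have e2 := hkey (N + 2) (by omega)
    simp only [Nat.add_sub_cancel] at e1 e2
    have hsub := piQ_eq_iff.mp (e1.symm.trans e2)
    have hform : C (S (N + 1) - S (N + 2)) + C (S (N + 1) - S N) * X ^ (n - 1)
        = (C (S (N + 1)) - C (S N) * X ^ (n - 1))
          - (C (S (N + 2)) - C (S (N + 1)) * X ^ (n - 1)) := by
      rw [map_sub C, map_sub C]
      ring
    obtain ⟨ha, hb⟩ := extract n hn (show (X : Polynomial k) ^ n ∣ _ by rw [hform]; exact hsub)
    have hpoly : C (S (N + 1)) - C (S N) * X ^ (n - 1)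
        = C (S (N + 1)) * (1 - X ^ (n - 1)) := by
      rw [← hb]
      ring
    rw [hpoly] at e1
    obtain ⟨q', hq'⟩ := piQ_eq_iff.mp e1
    exact ⟨S (N + 1), q', by linear_combination hq'⟩
  · intro hd'
    refine ⟨σ.symm e, ?_, σ.apply_symm_apply e⟩
    intro h
    obtain ⟨N, hN⟩ := locNilp n (σ.symm e)
    have hd2 : ∀ g : Polynomial k, ∃ c : k, ∃ q : Polynomial k,
        (e : Module.End k (Polynomial k)) g = C c * (1 - X ^ (n - 1)) + X ^ n * q := hd'
    choose c q hcq using hd2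
    have hww' : piQ k n (-((X : Polynomial k) ^ (n - 1))) * piQ k n (-((X : Polynomial k) ^ (n - 1))) = 0 := by
      rw [← map_mul, show (-((X : Polynomial k) ^ (n - 1))) * (-((X : Polynomial k) ^ (n - 1)))
          = (X : Polynomial k) ^ (n - 1) * (X : Polynomial k) ^ (n - 1) from by ring, map_mul]
      exact hww
    have hptneg : ∀ v : Module.End k (Polynomial k),
        adOp (Algebra.lmul k (Polynomial k) (-((X : Polynomial k) ^ (n - 1)))) v
          = -((adOp (Tmul k ^ (n - 1))) v) := by
      intro v
      refine LinearMap.ext fun g => ?_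
      rw [LinearMap.neg_apply, hpw, adOp_lmul_app, adOp_lmul_app]
      have h1 : (-((X : Polynomial k) ^ (n - 1))) * g = -(((X : Polynomial k) ^ (n - 1)) * g) := by
        ring
      rw [h1, map_neg]
      ring
    set S : ℕ → k := fun M => ∑ j ∈ Finset.range M,
      (j.factorial : k)⁻¹ * c ((-((X : Polynomial k) ^ (n - 1))) ^ j * h) with hSdef
    have hG : ∀ M : ℕ, (∑ j ∈ Finset.range M, (j.factorial : k)⁻¹ •
        piQ k n ((e : Module.End k (Polynomial k)) ((-((X : Polynomial k) ^ (n - 1))) ^ j * h)))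
        = piQ k n (C (S M) * (1 - X ^ (n - 1))) := by
      intro M
      have hCS : C (S M) = ∑ j ∈ Finset.range M,
          C ((j.factorial : k)⁻¹ * c ((-((X : Polynomial k) ^ (n - 1))) ^ j * h)) :=
        map_sum C _ _
      rw [hCS, Finset.sum_mul, map_sum]
      refine Finset.sum_congr rfl fun j _ => ?_
      rw [hcq ((-((X : Polynomial k) ^ (n - 1))) ^ j * h), map_add, hXn, add_zero, ← map_smul]
      congr 1
      rw [← smul_mul_assoc]
      congr 1
      rw [Polynomial.smul_C, smul_eq_mul]
    have hkey : ∀ M : ℕ, N ≤ M →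
        piQ k n (((σ.symm e : WeylA k) : Module.End k (Polynomial k)) h)
          = piQ k n (C (S M) + C (S (M - 1) - S M) * X ^ (n - 1)) := by
      intro M hM
      have hδM := adOp_pow_mono hM hN
      have hσM := hσ (σ.symm e) M hδM
      have hinv := exp_inv (adOp (Tmul k ^ (n - 1)))
        (adOp (Algebra.lmul k (Polynomial k) (-((X : Polynomial k) ^ (n - 1))))) hptneg M
        ((σ.symm e : WeylA k) : Module.End k (Polynomial k)) hδM
      rw [← hσM, σ.apply_symm_apply e] at hinv
      rw [← hinv, engine n (-((X : Polynomial k) ^ (n - 1))) hww' _ M h, hG, hG,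
        ← map_mul, ← map_sub]
      rw [piQ_eq_iff]
      have hXdvd : (X : Polynomial k) ^ n ∣ (X : Polynomial k) ^ (n - 1) * X ^ (n - 1) := by
        rw [← pow_add]
        exact pow_dvd_pow X (by omega)
      have hA : (C (S M) * (1 - X ^ (n - 1))
            - (-((X : Polynomial k) ^ (n - 1))) * (C (S (M - 1)) * (1 - X ^ (n - 1))))
            - (C (S M) + C (S (M - 1) - S M) * X ^ (n - 1))
          = -(C (S (M - 1)) * ((X : Polynomial k) ^ (n - 1) * X ^ (n - 1))) := by
        rw [map_sub C]
        ring
      rw [hA]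
      exact dvd_neg.2 (hXdvd.mul_left _)
    have e1 := hkey (N + 1) (by omega)
    have e2 := hkey (N + 2) (by omega)
    simp only [Nat.add_sub_cancel] at e1 e2
    have hsub := piQ_eq_iff.mp (e1.symm.trans e2)
    have hform : C (S (N + 1) - S (N + 2))
          + C ((S N - S (N + 1)) - (S (N + 1) - S (N + 2))) * X ^ (n - 1)
        = (C (S (N + 1)) + C (S N - S (N + 1)) * X ^ (n - 1))
          - (C (S (N + 2)) + C (S (N + 1) - S (N + 2)) * X ^ (n - 1)) := by
      rw [map_sub C, map_sub C, map_sub C, map_sub C]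
      ring
    obtain ⟨ha, hb⟩ := extract n hn (show (X : Polynomial k) ^ n ∣ _ by rw [hform]; exact hsub)
    have hb0 : S N - S (N + 1) = 0 := by
      rw [hb, ha, sub_self]
    have hpoly : C (S (N + 1)) + C (S N - S (N + 1)) * X ^ (n - 1) = C (S (N + 1)) := by
      rw [hb0, Polynomial.C_0, zero_mul, add_zero]
    rw [hpoly] at e1
    obtain ⟨q', hq'⟩ := piQ_eq_iff.mp e1
    exact ⟨S (N + 1), q', by linear_combination hq'⟩
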